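/- (Theorem 4.1) Let Ω ⊂ ℝ² be open, T > 0, and let L, M, N, g₁₁, g₁₂, g₂₂ : Ω × [0,T) → ℝ be twice continuously differentiable with det g := g₁₁g₂₂ − g₁₂² > 0 and M < 0 everywhere. Define U := √(½(−(L−N) + √((L−N)² + 4M²))) and V := √(½((L−N) + √((L−N)² + 4M²))). Suppose that: (a) at t = 0 the constraint equations hold: ∂₁U + ∂₂V = 0 and ∂₁(Γ¹₂₂L − 2Γ¹₁₂M + Γ¹₁₁N) + ∂₂(Γ²₂₂L − 2Γ²₁₂M + Γ²₁₁N) = 0, and the Gauss–Codazzi equations hold; (b) for all t ∈ [0,T): the Gauss–Codazzi equations hold, the evolution equations ∂_t U = Γ¹₂₂L − 2Γ¹₁₂M + Γ¹₁₁N and ∂_t V = Γ²₂₂L − 2Γ²₁₂M + Γ²₁₁N hold, and ∂₁(Γ¹₂₂L − 2Γ¹₁₂M + Γ¹₁₁N) + ∂₂(Γ²₂₂L − 2Γ²₁₂M + Γ²₁₁N) = 0. Then the functions u := U, v := V, and p := L − V² (which equals N − U²) satisfy the incompressible Euler equations ∂₁(u² + p) + ∂₂(uv) = −∂_t u, ∂₁(uv)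 + ∂₂(v² + p) = −∂_t v, ∂₁u + ∂₂v = 0 on Ω × [0,T), and moreover L = v² + p, M = −uv, N = u² + p. -/

import Mathlib

noncomputable def pdx1 (f : ℝ × ℝ × ℝ → ℝ) (q : ℝ × ℝ × ℝ) : ℝ :=
  deriv (fun s => f (s, q.2.1, q.2.2)) q.1

noncomputable def pdx2 (f : ℝ × ℝ × ℝ → ℝ) (q : ℝ × ℝ × ℝ) : ℝ :=
  deriv (fun s => f (q.1, s, q.2.2)) q.2.1

noncomputable def pdt (f : ℝ × ℝ × ℝ → ℝ) (q : ℝ × ℝ × ℝ) : ℝ :=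
  deriv (fun s => f (q.1, q.2.1, s)) q.2.2

/-- Determinant of the metric `g₁₁g₂₂ - g₁₂²`. -/
noncomputable def detg (g11 g12 g22 : ℝ × ℝ × ℝ → ℝ) (q : ℝ × ℝ × ℝ) : ℝ :=
  g11 q * g22 q - (g12 q) ^ 2

/-- Christoffel symbol Γ¹₁₁. -/
noncomputable def Gamma1_11 (g11 g12 g22 : ℝ × ℝ × ℝ → ℝ) (q : ℝ × ℝ × ℝ) : ℝ :=
  (g22 q * pdx1 g11 q - g12 q * (2 * pdx1 g12 q - pdx2 g11 q)) / (2 * detg g11 g12 g22 q)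

/-- Christoffel symbol Γ¹₁₂. -/
noncomputable def Gamma1_12 (g11 g12 g22 : ℝ × ℝ × ℝ → ℝ) (q : ℝ × ℝ × ℝ) : ℝ :=
  (g22 q * pdx2 g11 q - g12 q * pdx1 g22 q) / (2 * detg g11 g12 g22 q)

/-- Christoffel symbol Γ¹₂₂. -/
noncomputable def Gamma1_22 (g11 g12 g22 : ℝ × ℝ × ℝ → ℝ) (q : ℝ × ℝ × ℝ) : ℝ :=
  (g22 q * (2 * pdx2 g12 q - pdx1 g22 q) - g12 q * pdx2 g22 q) / (2 * detg g11 g12 g22 q)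

/-- Christoffel symbol Γ²₁₁. -/
noncomputable def Gamma2_11 (g11 g12 g22 : ℝ × ℝ × ℝ → ℝ) (q : ℝ × ℝ × ℝ) : ℝ :=
  (-(g12 q) * pdx1 g11 q + g11 q * (2 * pdx1 g12 q - pdx2 g11 q)) / (2 * detg g11 g12 g22 q)

/-- Christoffel symbol Γ²₁₂. -/
noncomputable def Gamma2_12 (g11 g12 g22 : ℝ × ℝ × ℝ → ℝ) (q : ℝ × ℝ × ℝ) : ℝ :=
  (-(g12 q) * pdx2 g11 q + g11 q * pdx1 g22 q) / (2 * detg g11 g12 g22 q)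

/-- Christoffel symbol Γ²₂₂. -/
noncomputable def Gamma2_22 (g11 g12 g22 : ℝ × ℝ × ℝ → ℝ) (q : ℝ × ℝ × ℝ) : ℝ :=
  (-(g12 q) * (2 * pdx2 g12 q - pdx1 g22 q) + g11 q * pdx2 g22 q) / (2 * detg g11 g12 g22 q)

/-- Gauss curvature of `g` via the Brioschi formula (spatial derivatives). -/
noncomputable def brioschi (g11 g12 g22 : ℝ × ℝ × ℝ → ℝ) (q : ℝ × ℝ × ℝ) : ℝ :=
  (1 / (2 * (detg g11 g12 g22 q) ^ 2)) *
    Matrix.det !![-(pdx2 (pdx2 g11) q) + 2 * pdx1 (pdx2 g12) q - pdx1 (pdx1 g22) q,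
                    pdx1 g11 q, 2 * pdx1 g12 q - pdx2 g11 q;
                  2 * pdx2 g12 q - pdx1 g22 q, 2 * g11 q, 2 * g12 q;
                  pdx2 g22 q, 2 * g12 q, 2 * g22 q]
  - (1 / (2 * (detg g11 g12 g22 q) ^ 2)) *
    Matrix.det !![0, pdx2 g11 q, pdx1 g22 q;
                  pdx2 g11 q, 2 * g11 q, 2 * g12 q;
                  pdx1 g22 q, 2 * g12 q, 2 * g22 q]

/-- The Gauss–Codazzi equations for `(L, M, N)` and the metric `g` at the point `q`. -/
def GaussCodazzi (L M N g11 g12 g22 : ℝ × ℝ × ℝ → ℝ) (q : ℝ × ℝ × ℝ) : Prop :=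
  pdx1 N q - pdx2 M q =
    -(Gamma1_22 g11 g12 g22 q) * L q + 2 * Gamma1_12 g11 g12 g22 q * M q
      - Gamma1_11 g11 g12 g22 q * N q ∧
  pdx1 M q - pdx2 L q =
    Gamma2_22 g11 g12 g22 q * L q - 2 * Gamma2_12 g11 g12 g22 q * M q
      + Gamma2_11 g11 g12 g22 q * N q ∧
  L q * N q - (M q) ^ 2 = brioschi g11 g12 g22 q


open Filter Set Topology

/-! ### Auxiliary lemmas -/

private lemma lineD1 (x y t : ℝ) :
    HasDerivAt (fun s : ℝ => ((s, y, t) : ℝ × ℝ × ℝ)) ((1:ℝ), (0:ℝ), (0:ℝ)) x :=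
  (hasDerivAt_id x).prodMk (hasDerivAt_const x (y, t))

private lemma lineD2 (x y t : ℝ) :
    HasDerivAt (fun s : ℝ => ((x, s, t) : ℝ × ℝ × ℝ)) ((0:ℝ), (1:ℝ), (0:ℝ)) y :=
  (hasDerivAt_const y x).prodMk ((hasDerivAt_id y).prodMk (hasDerivAt_const y t))

private lemma lineD3 (x y t : ℝ) :
    HasDerivAt (fun s : ℝ => ((x, y, s) : ℝ × ℝ × ℝ)) ((0:ℝ), (0:ℝ), (1:ℝ)) t :=
  (hasDerivAt_const t x).prodMk ((hasDerivAt_const t y).prodMk (hasDerivAt_id t))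

private lemma pdx1_hasDerivAt {f : ℝ × ℝ × ℝ → ℝ} {q : ℝ × ℝ × ℝ} {B : ℝ × ℝ × ℝ →L[ℝ] ℝ}
    (hf : HasFDerivAt f B q) :
    HasDerivAt (fun s => f (s, q.2.1, q.2.2)) (B (1, 0, 0)) q.1 :=
  hf.comp_hasDerivAt q.1 (lineD1 q.1 q.2.1 q.2.2)

private lemma pdx2_hasDerivAt {f : ℝ × ℝ × ℝ → ℝ} {q : ℝ × ℝ × ℝ} {B : ℝ × ℝ × ℝ →L[ℝ] ℝ}
    (hf : HasFDerivAt f B q) :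
    HasDerivAt (fun s => f (q.1, s, q.2.2)) (B (0, 1, 0)) q.2.1 :=
  hf.comp_hasDerivAt q.2.1 (lineD2 q.1 q.2.1 q.2.2)

private lemma pdt_hasDerivAt {f : ℝ × ℝ × ℝ → ℝ} {q : ℝ × ℝ × ℝ} {B : ℝ × ℝ × ℝ →L[ℝ] ℝ}
    (hf : HasFDerivAt f B q) :
    HasDerivAt (fun s => f (q.1, q.2.1, s)) (B (0, 0, 1)) q.2.2 :=
  hf.comp_hasDerivAt q.2.2 (lineD3 q.1 q.2.1 q.2.2)

private lemma pdx1_eq_fderiv {f : ℝ × ℝ × ℝ → ℝ} {q : ℝ × ℝ × ℝ}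
    (hf : DifferentiableAt ℝ f q) : pdx1 f q = fderiv ℝ f q (1, 0, 0) :=
  (pdx1_hasDerivAt hf.hasFDerivAt).deriv

private lemma pdx2_eq_fderiv {f : ℝ × ℝ × ℝ → ℝ} {q : ℝ × ℝ × ℝ}
    (hf : DifferentiableAt ℝ f q) : pdx2 f q = fderiv ℝ f q (0, 1, 0) :=
  (pdx2_hasDerivAt hf.hasFDerivAt).deriv

private lemma pdt_eq_fderiv {f : ℝ × ℝ × ℝ → ℝ} {q : ℝ × ℝ × ℝ}
    (hf : DifferentiableAt ℝ f q) : pdt f q = fderiv ℝ f q (0, 0, 1) :=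
  (pdt_hasDerivAt hf.hasFDerivAt).deriv

private lemma pdx1_hasDerivAt_within {f : ℝ × ℝ × ℝ → ℝ} {q : ℝ × ℝ × ℝ}
    {B : ℝ × ℝ × ℝ →L[ℝ] ℝ} {D : Set (ℝ × ℝ × ℝ)} (hf : HasFDerivWithinAt f B D q)
    (hnb : {s : ℝ | ((s, q.2.1, q.2.2) : ℝ × ℝ × ℝ) ∈ D} ∈ 𝓝 q.1) :
    HasDerivAt (fun s => f (s, q.2.1, q.2.2)) (B (1, 0, 0)) q.1 := by
  have h := hf.comp_hasDerivWithinAt q.1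
    ((lineD1 q.1 q.2.1 q.2.2).hasDerivWithinAt
      (s := {s : ℝ | ((s, q.2.1, q.2.2) : ℝ × ℝ × ℝ) ∈ D})) (fun s hs => hs)
  exact h.hasDerivAt hnb

private lemma pdx2_hasDerivAt_within {f : ℝ × ℝ × ℝ → ℝ} {q : ℝ × ℝ × ℝ}
    {B : ℝ × ℝ × ℝ →L[ℝ] ℝ} {D : Set (ℝ × ℝ × ℝ)} (hf : HasFDerivWithinAt f B D q)
    (hnb : {s : ℝ | ((q.1, s, q.2.2) : ℝ × ℝ × ℝ) ∈ D} ∈ 𝓝 q.2.1) :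
    HasDerivAt (fun s => f (q.1, s, q.2.2)) (B (0, 1, 0)) q.2.1 := by
  have h := hf.comp_hasDerivWithinAt q.2.1
    ((lineD2 q.1 q.2.1 q.2.2).hasDerivWithinAt
      (s := {s : ℝ | ((q.1, s, q.2.2) : ℝ × ℝ × ℝ) ∈ D})) (fun s hs => hs)
  exact h.hasDerivAt hnb

private lemma sqrt_facts {a m : ℝ} (hm : m < 0) :
    0 < a ^ 2 + 4 * m ^ 2 ∧
    0 < 1 / 2 * (-a + Real.sqrt (a ^ 2 + 4 * m ^ 2)) ∧
    0 < 1 / 2 * (a + Real.sqrt (a ^ 2 + 4 * m ^ 2)) ∧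
    Real.sqrt (1 / 2 * (-a + Real.sqrt (a ^ 2 + 4 * m ^ 2))) *
      Real.sqrt (1 / 2 * (a + Real.sqrt (a ^ 2 + 4 * m ^ 2))) = -m ∧
    Real.sqrt (1 / 2 * (a + Real.sqrt (a ^ 2 + 4 * m ^ 2))) ^ 2 -
      Real.sqrt (1 / 2 * (-a + Real.sqrt (a ^ 2 + 4 * m ^ 2))) ^ 2 = a := by
  have hm2 : 0 < m ^ 2 := by nlinarith
  have hpos : 0 < a ^ 2 + 4 * m ^ 2 := by nlinarith [sq_nonneg a]
  set S := Real.sqrt (a ^ 2 + 4 * m ^ 2) with hS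
  have hS2 : S ^ 2 = a ^ 2 + 4 * m ^ 2 := Real.sq_sqrt hpos.le
  have habs : |a| < S := by
    have h1 : Real.sqrt (a ^ 2) < S := Real.sqrt_lt_sqrt (sq_nonneg a) (by nlinarith)
    rwa [Real.sqrt_sq_eq_abs] at h1
  have ha1 : a < S := lt_of_le_of_lt (le_abs_self a) habs
  have ha2 : -a < S := lt_of_le_of_lt (neg_le_abs a) habs
  have h1 : 0 < 1 / 2 * (-a + S) := by linarith
  have h2 : 0 < 1 / 2 * (a + S) := by linarith
  have hu2 : Real.sqrt (1 / 2 * (-a + S)) ^ 2 = 1 / 2 * (-a + S) := Real.sq_sqrt h1.le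
  have hv2 : Real.sqrt (1 / 2 * (a + S)) ^ 2 = 1 / 2 * (a + S) := Real.sq_sqrt h2.le
  refine ⟨hpos, h1, h2, ?_, by rw [hu2, hv2]; ring⟩
  have hprod : (Real.sqrt (1 / 2 * (-a + S)) * Real.sqrt (1 / 2 * (a + S))) ^ 2 = m ^ 2 := by
    rw [mul_pow, hu2, hv2]; nlinarith
  have hnn : 0 ≤ Real.sqrt (1 / 2 * (-a + S)) * Real.sqrt (1 / 2 * (a + S)) :=
    mul_nonneg (Real.sqrt_nonneg _) (Real.sqrt_nonneg _)
  calc Real.sqrt (1 / 2 * (-a + S)) * Real.sqrt (1 / 2 * (a + S))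
      = Real.sqrt ((Real.sqrt (1 / 2 * (-a + S)) * Real.sqrt (1 / 2 * (a + S))) ^ 2) :=
        (Real.sqrt_sq hnn).symm
    _ = Real.sqrt (m ^ 2) := by rw [hprod]
    _ = -m := by rw [Real.sqrt_sq_eq_abs, abs_of_neg hm]

set_option maxHeartbeats 1600000 in
/-- Equality of mixed second partial derivatives, in the form we need: if `W` is `C²`
near `r` and `pdt W = F` near `r`, then `s ↦ pdx1 W (r.1, r.2.1, s)` has derivative
`pdx1 F r` (and similarly for `pdx2`). -/
private lemma cross_deriv {W F : ℝ × ℝ × ℝ → ℝ} {r : ℝ × ℝ × ℝ}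
    (hW : ContDiffAt ℝ 2 W r) (hWF : ∀ᶠ r' in 𝓝 r, pdt W r' = F r') :
    HasDerivAt (fun s' => pdx1 W (r.1, r.2.1, s')) (pdx1 F r) r.2.2 ∧
    HasDerivAt (fun s' => pdx2 W (r.1, r.2.1, s')) (pdx2 F r) r.2.2 := by
  have hev : ∀ᶠ r' in 𝓝 r, HasFDerivAt W (fderiv ℝ W r') r' := by
    filter_upwards [hW.eventually (by norm_num)] with r' h using
      (h.differentiableAt (by norm_num)).hasFDerivAt
  have hd1 : ContDiffAt ℝ 1 (fderiv ℝ W) r := hW.fderiv_right (by norm_num)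
  have hd : DifferentiableAt ℝ (fderiv ℝ W) r := hd1.differentiableAt (by norm_num)
  have hsymm := second_derivative_symmetric_of_eventually hev hd.hasFDerivAt
  set B'' := fderiv ℝ (fderiv ℝ W) r with hB''
  have hWev : ∀ᶠ r' in 𝓝 r, DifferentiableAt ℝ W r' := by
    filter_upwards [hev] with r' h using h.differentiableAt
  have hc3 : HasDerivAt (fun s' => fderiv ℝ W (r.1, r.2.1, s')) (B'' (0, 0, 1)) r.2.2 :=
    hd.hasFDerivAt.comp_hasDerivAt r.2.2 (lineD3 r.1 r.2.1 r.2.2)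
  have hpre3 : (fun s' : ℝ => ((r.1, r.2.1, s') : ℝ × ℝ × ℝ)) ⁻¹'
      {r' | DifferentiableAt ℝ W r'} ∈ 𝓝 r.2.2 :=
    ContinuousAt.preimage_mem_nhds
      ((continuous_const.prodMk (continuous_const.prodMk continuous_id)).continuousAt) hWev
  constructor
  · have h1 : HasDerivAt (fun s' => fderiv ℝ W (r.1, r.2.1, s') ((1:ℝ), 0, 0))
        (B'' (0, 0, 1) (1, 0, 0)) r.2.2 := by
      have := hc3.clm_apply (hasDerivAt_const r.2.2 ((1:ℝ), (0:ℝ), (0:ℝ)))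
      simpa using this
    have h2 : HasDerivAt (fun s' => pdx1 W (r.1, r.2.1, s')) (B'' (0, 0, 1) (1, 0, 0)) r.2.2 := by
      refine h1.congr_of_eventuallyEq ?_
      filter_upwards [hpre3] with s' hs'
      exact pdx1_eq_fderiv hs'
    have h3 : pdx1 F r = B'' (1, 0, 0) (0, 0, 1) := by
      have hc1 : HasDerivAt (fun s' => fderiv ℝ W (s', r.2.1, r.2.2) ((0:ℝ), 0, 1))
          (B'' (1, 0, 0) (0, 0, 1)) r.1 := by
        have := (hd.hasFDerivAt.comp_hasDerivAt r.1 (lineD1 r.1 r.2.1 r.2.2)).clm_apply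
          (hasDerivAt_const r.1 ((0:ℝ), (0:ℝ), (1:ℝ)))
        simpa using this
      have heq : (fun s' => F (s', r.2.1, r.2.2)) =ᶠ[𝓝 r.1]
          (fun s' => fderiv ℝ W (s', r.2.1, r.2.2) ((0:ℝ), 0, 1)) := by
        have hpre : (fun s' : ℝ => ((s', r.2.1, r.2.2) : ℝ × ℝ × ℝ)) ⁻¹'
            {r' | DifferentiableAt ℝ W r' ∧ pdt W r' = F r'} ∈ 𝓝 r.1 := by
          apply ContinuousAt.preimage_mem_nhds
            ((continuous_id.prodMk continuous_const).continuousAt)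
          filter_upwards [hWev, hWF] with r' a b using ⟨a, b⟩
        filter_upwards [hpre] with s' hs'
        rw [← hs'.2]
        exact pdt_eq_fderiv hs'.1
      unfold pdx1
      rw [heq.deriv_eq]
      exact hc1.deriv
    rw [h3, hsymm ((1:ℝ), (0:ℝ), (0:ℝ)) ((0:ℝ), (0:ℝ), (1:ℝ))]
    exact h2
  · have h1 : HasDerivAt (fun s' => fderiv ℝ W (r.1, r.2.1, s') ((0:ℝ), 1, 0))
        (B'' (0, 0, 1) (0, 1, 0)) r.2.2 := by
      have := hc3.clm_apply (hasDerivAt_const r.2.2 ((0:ℝ), (1:ℝ), (0:ℝ)))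
      simpa using this
    have h2 : HasDerivAt (fun s' => pdx2 W (r.1, r.2.1, s')) (B'' (0, 0, 1) (0, 1, 0)) r.2.2 := by
      refine h1.congr_of_eventuallyEq ?_
      filter_upwards [hpre3] with s' hs'
      exact pdx2_eq_fderiv hs'
    have h3 : pdx2 F r = B'' (0, 1, 0) (0, 0, 1) := by
      have hc1 : HasDerivAt (fun s' => fderiv ℝ W (r.1, s', r.2.2) ((0:ℝ), 0, 1))
          (B'' (0, 1, 0) (0, 0, 1)) r.2.1 := by
        have := (hd.hasFDerivAt.comp_hasDerivAt r.2.1 (lineD2 r.1 r.2.1 r.2.2)).clm_apply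
          (hasDerivAt_const r.2.1 ((0:ℝ), (0:ℝ), (1:ℝ)))
        simpa using this
      have heq : (fun s' => F (r.1, s', r.2.2)) =ᶠ[𝓝 r.2.1]
          (fun s' => fderiv ℝ W (r.1, s', r.2.2) ((0:ℝ), 0, 1)) := by
        have hpre : (fun s' : ℝ => ((r.1, s', r.2.2) : ℝ × ℝ × ℝ)) ⁻¹'
            {r' | DifferentiableAt ℝ W r' ∧ pdt W r' = F r'} ∈ 𝓝 r.2.1 := by
          apply ContinuousAt.preimage_mem_nhds
            ((continuous_const.prodMk (continuous_id.prodMk continuous_const)).continuousAt)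
          filter_upwards [hWev, hWF] with r' a b using ⟨a, b⟩
        filter_upwards [hpre] with s' hs'
        rw [← hs'.2]
        exact pdt_eq_fderiv hs'.1
      unfold pdx2
      rw [heq.deriv_eq]
      exact hc1.deriv
    rw [h3, hsymm ((0:ℝ), (1:ℝ), (0:ℝ)) ((0:ℝ), (0:ℝ), (1:ℝ))]
    exact h2
/-- Theorem 4.1: if `(L, M, N, g)` satisfies the constraint equations at `t = 0`
and the geometric-flow system (Gauss–Codazzi, the evolution equations, and the
divergence-free closure) for all `t ∈ [0,T)`, then `u := U(L,M,N)`, `v := V(L,M,N)`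
and `p := L − V²` solve the incompressible Euler equations, with
`L = v² + p`, `M = −uv`, `N = u² + p`. -/
theorem statement2 (Ω : Set (ℝ × ℝ)) (hΩ : IsOpen Ω) (T : ℝ) (hT : 0 < T)
    (L M N g11 g12 g22 : ℝ × ℝ × ℝ → ℝ)
    (D : Set (ℝ × ℝ × ℝ))
    (hD : D = {q : ℝ × ℝ × ℝ | (q.1, q.2.1) ∈ Ω ∧ q.2.2 ∈ Set.Ico 0 T})
    (hLreg : ContDiffOn ℝ 2 L D) (hMreg : ContDiffOn ℝ 2 M D) (hNreg : ContDiffOn ℝ 2 N D)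
    (hg11 : ContDiffOn ℝ 2 g11 D) (hg12 : ContDiffOn ℝ 2 g12 D) (hg22 : ContDiffOn ℝ 2 g22 D)
    (hdet : ∀ q ∈ D, 0 < detg g11 g12 g22 q)
    (hMneg : ∀ q ∈ D, M q < 0)
    (U V : ℝ × ℝ × ℝ → ℝ)
    (hU : U = fun q =>
      Real.sqrt ((1 / 2) * (-(L q - N q) + Real.sqrt ((L q - N q) ^ 2 + 4 * (M q) ^ 2))))
    (hV : V = fun q =>
      Real.sqrt ((1 / 2) * ((L q - N q) + Real.sqrt ((L q - N q) ^ 2 + 4 * (M q) ^ 2))))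
    -- (a) the constraint equations at `t = 0`:
    (hinit_div : ∀ q ∈ D, q.2.2 = 0 → pdx1 U q + pdx2 V q = 0)
    (hinit_cons : ∀ q ∈ D, q.2.2 = 0 →
      pdx1 (fun r => Gamma1_22 g11 g12 g22 r * L r - 2 * Gamma1_12 g11 g12 g22 r * M r
        + Gamma1_11 g11 g12 g22 r * N r) q
      + pdx2 (fun r => Gamma2_22 g11 g12 g22 r * L r - 2 * Gamma2_12 g11 g12 g22 r * M r
        + Gamma2_11 g11 g12 g22 r * N r) q = 0)
    (hinit_GC : ∀ q ∈ D, q.2.2 = 0 → GaussCodazzi L M N g11 g12 g22 q)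
    -- (b) the system for all `t ∈ [0,T)`:
    (hGC : ∀ q ∈ D, GaussCodazzi L M N g11 g12 g22 q)
    (hevolU : ∀ q ∈ D, pdt U q =
      Gamma1_22 g11 g12 g22 q * L q - 2 * Gamma1_12 g11 g12 g22 q * M q
        + Gamma1_11 g11 g12 g22 q * N q)
    (hevolV : ∀ q ∈ D, pdt V q =
      Gamma2_22 g11 g12 g22 q * L q - 2 * Gamma2_12 g11 g12 g22 q * M q
        + Gamma2_11 g11 g12 g22 q * N q)
    (hcons : ∀ q ∈ D,
      pdx1 (fun r => Gamma1_22 g11 g12 g22 r * L r - 2 * Gamma1_12 g11 g12 g22 r * M r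
        + Gamma1_11 g11 g12 g22 r * N r) q
      + pdx2 (fun r => Gamma2_22 g11 g12 g22 r * L r - 2 * Gamma2_12 g11 g12 g22 r * M r
        + Gamma2_11 g11 g12 g22 r * N r) q = 0) :
    ∀ q ∈ D,
      pdx1 (fun r => (U r) ^ 2 + (L r - (V r) ^ 2)) q + pdx2 (fun r => U r * V r) q
        = -(pdt U q) ∧
      pdx1 (fun r => U r * V r) q + pdx2 (fun r => (V r) ^ 2 + (L r - (V r) ^ 2)) q
        = -(pdt V q) ∧
      pdx1 U q + pdx2 V q = 0 ∧
      L q = (V q) ^ 2 + (L q - (V q) ^ 2) ∧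
      M q = -(U q * V q) ∧
      N q = (U q) ^ 2 + (L q - (V q) ^ 2) := by
  -- Pointwise algebraic consequences of the definitions of `U` and `V`
  have hfact : ∀ r ∈ D, U r * V r = -(M r) ∧ V r ^ 2 - U r ^ 2 = L r - N r := by
    intro r hr
    obtain ⟨-, -, -, h4, h5⟩ := sqrt_facts (a := L r - N r) (hMneg r hr)
    constructor
    · simp only [hU, hV]; exact h4
    · simp only [hU, hV]; exact h5
  have hMfact : ∀ r ∈ D, M r = -(U r * V r) := by
    intro r hr; have := (hfact r hr).1; linarith
  have hNfact : ∀ r ∈ D, N r = U r ^ 2 + (L r - V r ^ 2) := by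
    intro r hr; have := (hfact r hr).2; linarith
  -- Regularity of U and V
  have hUreg : ContDiffOn ℝ 2 U D := by
    rw [hU]
    intro r hr
    obtain ⟨hp, h1, -, -, -⟩ := sqrt_facts (a := L r - N r) (hMneg r hr)
    have hLr := hLreg r hr; have hMr := hMreg r hr; have hNr := hNreg r hr
    have hΨ : ContDiffWithinAt ℝ 2 (fun q => (L q - N q) ^ 2 + 4 * (M q) ^ 2) D r :=
      ((hLr.sub hNr).pow 2).add (contDiffWithinAt_const.mul (hMr.pow 2))
    have hsq : ContDiffWithinAt ℝ 2
        (fun q => Real.sqrt ((L q - N q) ^ 2 + 4 * (M q) ^ 2)) D r :=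
      (Real.contDiffAt_sqrt (ne_of_gt hp)).comp_contDiffWithinAt r hΨ
    have hΦ : ContDiffWithinAt ℝ 2
        (fun q => (1 / 2) * (-(L q - N q) + Real.sqrt ((L q - N q) ^ 2 + 4 * (M q) ^ 2))) D r :=
      contDiffWithinAt_const.mul (((hLr.sub hNr).neg).add hsq)
    exact (Real.contDiffAt_sqrt (ne_of_gt h1)).comp_contDiffWithinAt r hΦ
  have hVreg : ContDiffOn ℝ 2 V D := by
    rw [hV]
    intro r hr
    obtain ⟨hp, -, h2, -, -⟩ := sqrt_facts (a := L r - N r) (hMneg r hr)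
    have hLr := hLreg r hr; have hMr := hMreg r hr; have hNr := hNreg r hr
    have hΨ : ContDiffWithinAt ℝ 2 (fun q => (L q - N q) ^ 2 + 4 * (M q) ^ 2) D r :=
      ((hLr.sub hNr).pow 2).add (contDiffWithinAt_const.mul (hMr.pow 2))
    have hsq : ContDiffWithinAt ℝ 2
        (fun q => Real.sqrt ((L q - N q) ^ 2 + 4 * (M q) ^ 2)) D r :=
      (Real.contDiffAt_sqrt (ne_of_gt hp)).comp_contDiffWithinAt r hΨ
    have hΦ : ContDiffWithinAt ℝ 2
        (fun q => (1 / 2) * ((L q - N q) + Real.sqrt ((L q - N q) ^ 2 + 4 * (M q) ^ 2))) D r :=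
      contDiffWithinAt_const.mul ((hLr.sub hNr).add hsq)
    exact (Real.contDiffAt_sqrt (ne_of_gt h2)).comp_contDiffWithinAt r hΦ
  -- spatial lines stay in D near each point of D
  have hline1mem : ∀ q ∈ D, {s : ℝ | ((s, q.2.1, q.2.2) : ℝ × ℝ × ℝ) ∈ D} ∈ 𝓝 q.1 := by
    intro q hq
    rw [hD] at hq
    have hopen : IsOpen {s : ℝ | (s, q.2.1) ∈ Ω} :=
      hΩ.preimage (continuous_id.prodMk continuous_const)
    refine Filter.mem_of_superset (hopen.mem_nhds hq.1) fun s hs => ?_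
    rw [hD]; exact ⟨hs, hq.2⟩
  have hline2mem : ∀ q ∈ D, {s : ℝ | ((q.1, s, q.2.2) : ℝ × ℝ × ℝ) ∈ D} ∈ 𝓝 q.2.1 := by
    intro q hq
    rw [hD] at hq
    have hopen : IsOpen {s : ℝ | (q.1, s) ∈ Ω} :=
      hΩ.preimage (continuous_const.prodMk continuous_id)
    refine Filter.mem_of_superset (hopen.mem_nhds hq.1) fun s hs => ?_
    rw [hD]; exact ⟨hs, hq.2⟩
  -- useful open sets
  have hopenA : IsOpen {r : ℝ × ℝ × ℝ | (r.1, r.2.1) ∈ Ω} :=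
    hΩ.preimage (continuous_fst.prodMk (continuous_fst.comp continuous_snd))
  have hBopen : IsOpen {r : ℝ × ℝ × ℝ | r.2.2 ∈ Set.Ioo 0 T} :=
    isOpen_Ioo.preimage (continuous_snd.comp continuous_snd)
  rintro ⟨x, y, t⟩ hq
  have hxyt := hq
  rw [hD] at hxyt
  have hxy : (x, y) ∈ Ω := hxyt.1
  have ht0 : 0 ≤ t := hxyt.2.1
  have htT : t < T := hxyt.2.2
  have gc := hGC _ hq
  refine ⟨?_, ?_, ?_, by ring, hMfact _ hq, hNfact _ hq⟩
  · -- first Euler equation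
    have e1 : pdx1 (fun r => (U r) ^ 2 + (L r - (V r) ^ 2)) ((x, y, t) : ℝ × ℝ × ℝ)
        = pdx1 N ((x, y, t) : ℝ × ℝ × ℝ) := by
      unfold pdx1
      apply Filter.EventuallyEq.deriv_eq
      filter_upwards [hline1mem _ hq] with s hs
      exact (hNfact _ hs).symm
    have e2a : pdx2 (fun r => U r * V r) ((x, y, t) : ℝ × ℝ × ℝ)
        = pdx2 (fun r => -(M r)) ((x, y, t) : ℝ × ℝ × ℝ) := by
      unfold pdx2
      apply Filter.EventuallyEq.deriv_eq
      filter_upwards [hline2mem _ hq] with s hs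
      have := hMfact _ hs; linarith
    have e2b : pdx2 (fun r => -(M r)) ((x, y, t) : ℝ × ℝ × ℝ)
        = -(pdx2 M ((x, y, t) : ℝ × ℝ × ℝ)) := by
      unfold pdx2; exact deriv.neg
    rw [e1, e2a, e2b, hevolU _ hq]
    have h1 := gc.1
    linarith
  · -- second Euler equation
    have e1a : pdx1 (fun r => U r * V r) ((x, y, t) : ℝ × ℝ × ℝ)
        = pdx1 (fun r => -(M r)) ((x, y, t) : ℝ × ℝ × ℝ) := by
      unfold pdx1
      apply Filter.EventuallyEq.deriv_eq
      filter_upwards [hline1mem _ hq] with s hs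
      have := hMfact _ hs; linarith
    have e1b : pdx1 (fun r => -(M r)) ((x, y, t) : ℝ × ℝ × ℝ)
        = -(pdx1 M ((x, y, t) : ℝ × ℝ × ℝ)) := by
      unfold pdx1; exact deriv.neg
    have e2 : (fun r => (V r) ^ 2 + (L r - (V r) ^ 2)) = L := funext fun r => by ring
    rw [e1a, e1b, e2, hevolV _ hq]
    have h2 := gc.2.1
    linarith
  · -- divergence-free equation, by propagation from t = 0
    have hDmem : ∀ s ∈ Set.Icc 0 t, ((x, y, s) : ℝ × ℝ × ℝ) ∈ D := by
      intro s hs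
      rw [hD]; exact ⟨hxy, hs.1, lt_of_le_of_lt hs.2 htT⟩
    have hUd : ∀ r ∈ D, DifferentiableWithinAt ℝ U D r := fun r hr =>
      (hUreg r hr).differentiableWithinAt (by norm_num)
    have hVd : ∀ r ∈ D, DifferentiableWithinAt ℝ V D r := fun r hr =>
      (hVreg r hr).differentiableWithinAt (by norm_num)
    have hUniq : UniqueDiffOn ℝ D := by
      have hconvB : Convex ℝ {r : ℝ × ℝ × ℝ | r.2.2 ∈ Set.Ico 0 T} :=
        (convex_Ico (0:ℝ) T).linear_preimage ((LinearMap.snd ℝ ℝ ℝ).comp (LinearMap.snd ℝ ℝ (ℝ × ℝ)))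
      have hsub : {r : ℝ × ℝ × ℝ | r.2.2 ∈ Set.Ioo 0 T} ⊆ {r : ℝ × ℝ × ℝ | r.2.2 ∈ Set.Ico 0 T} :=
        fun r hr => ⟨hr.1.le, hr.2⟩
      have hBuniq : UniqueDiffOn ℝ {r : ℝ × ℝ × ℝ | r.2.2 ∈ Set.Ico 0 T} :=
        uniqueDiffOn_convex hconvB ⟨((0:ℝ), (0:ℝ), T/2),
          interior_maximal hsub hBopen ⟨half_pos hT, half_lt_self hT⟩⟩
      intro r hr
      rw [hD] at hr
      have h1 : UniqueDiffWithinAt ℝ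
          ({r : ℝ × ℝ × ℝ | r.2.2 ∈ Set.Ico 0 T} ∩ {r : ℝ × ℝ × ℝ | (r.1, r.2.1) ∈ Ω}) r :=
        (hBuniq r hr.2).inter (hopenA.mem_nhds hr.1)
      rw [Set.inter_comm] at h1
      rw [hD]
      exact h1
    have hlinecont : Continuous (fun s : ℝ => ((x, y, s) : ℝ × ℝ × ℝ)) :=
      continuous_const.prodMk (continuous_const.prodMk continuous_id)
    -- the divergence as a function of time, expressed via fderivWithin
    have hkey : ∀ s ∈ Set.Icc 0 t,
        pdx1 U ((x, y, s) : ℝ × ℝ × ℝ) + pdx2 V ((x, y, s) : ℝ × ℝ × ℝ) =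
        fderivWithin ℝ U D ((x, y, s) : ℝ × ℝ × ℝ) (1, 0, 0)
          + fderivWithin ℝ V D ((x, y, s) : ℝ × ℝ × ℝ) (0, 1, 0) := by
      intro s hs
      have hr := hDmem s hs
      have h1 := (pdx1_hasDerivAt_within ((hUd _ hr).hasFDerivWithinAt) (hline1mem _ hr)).deriv
      have h2 := (pdx2_hasDerivAt_within ((hVd _ hr).hasFDerivWithinAt) (hline2mem _ hr)).deriv
      unfold pdx1 pdx2
      rw [← h1, ← h2]
    -- continuity of the divergence in time
    have hcU : ContinuousOn (fderivWithin ℝ U D) D :=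
      hUreg.continuousOn_fderivWithin hUniq (by norm_num)
    have hcV : ContinuousOn (fderivWithin ℝ V D) D :=
      hVreg.continuousOn_fderivWithin hUniq (by norm_num)
    have hmaps : Set.MapsTo (fun s : ℝ => ((x, y, s) : ℝ × ℝ × ℝ)) (Set.Icc 0 t) D :=
      fun s hs => hDmem s hs
    have hc1 : ContinuousOn
        (fun s : ℝ => fderivWithin ℝ U D ((x, y, s) : ℝ × ℝ × ℝ) ((1:ℝ), (0:ℝ), (0:ℝ)))
        (Set.Icc 0 t) :=
      (hcU.comp hlinecont.continuousOn hmaps).clm_apply continuousOn_const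
    have hc2 : ContinuousOn
        (fun s : ℝ => fderivWithin ℝ V D ((x, y, s) : ℝ × ℝ × ℝ) ((0:ℝ), (1:ℝ), (0:ℝ)))
        (Set.Icc 0 t) :=
      (hcV.comp hlinecont.continuousOn hmaps).clm_apply continuousOn_const
    have hcont : ContinuousOn
        (fun s : ℝ => pdx1 U ((x, y, s) : ℝ × ℝ × ℝ) + pdx2 V ((x, y, s) : ℝ × ℝ × ℝ))
        (Set.Icc 0 t) :=
      (hc1.add hc2).congr hkey
    -- derivative of the divergence vanishes in (0, t)
    have hderiv0 : ∀ s ∈ Set.Ioo (0:ℝ) t,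
        HasDerivAt (fun s' : ℝ => pdx1 U ((x, y, s') : ℝ × ℝ × ℝ)
          + pdx2 V ((x, y, s') : ℝ × ℝ × ℝ)) 0 s := by
      intro s hs
      have hsT : s ∈ Set.Ioo 0 T := ⟨hs.1, lt_trans hs.2 htT⟩
      have hrD : ((x, y, s) : ℝ × ℝ × ℝ) ∈ D := hDmem s ⟨hs.1.le, hs.2.le⟩
      have hnbD : D ∈ 𝓝 ((x, y, s) : ℝ × ℝ × ℝ) := by
        refine Filter.mem_of_superset
          (((hopenA.inter hBopen)).mem_nhds ⟨hxy, hsT⟩) fun r hr => ?_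
        rw [hD]; exact ⟨hr.1, hr.2.1.le, hr.2.2⟩
      have hU2 : ContDiffAt ℝ 2 U ((x, y, s) : ℝ × ℝ × ℝ) := hUreg.contDiffAt hnbD
      have hV2 : ContDiffAt ℝ 2 V ((x, y, s) : ℝ × ℝ × ℝ) := hVreg.contDiffAt hnbD
      have hUF : ∀ᶠ r' in 𝓝 ((x, y, s) : ℝ × ℝ × ℝ), pdt U r' =
          (fun r => Gamma1_22 g11 g12 g22 r * L r - 2 * Gamma1_12 g11 g12 g22 r * M r
            + Gamma1_11 g11 g12 g22 r * N r) r' := by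
        filter_upwards [hnbD] with r' hr' using hevolU r' hr'
      have hVG : ∀ᶠ r' in 𝓝 ((x, y, s) : ℝ × ℝ × ℝ), pdt V r' =
          (fun r => Gamma2_22 g11 g12 g22 r * L r - 2 * Gamma2_12 g11 g12 g22 r * M r
            + Gamma2_11 g11 g12 g22 r * N r) r' := by
        filter_upwards [hnbD] with r' hr' using hevolV r' hr'
      have hcd1 := (cross_deriv hU2 hUF).1
      have hcd2 := (cross_deriv hV2 hVG).2
      have hsum := hcd1.add hcd2
      rw [hcons _ hrD] at hsum
      exact hsum
    -- monotone + antitone ⇒ constant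
    have hdiff : DifferentiableOn ℝ
        (fun s : ℝ => pdx1 U ((x, y, s) : ℝ × ℝ × ℝ) + pdx2 V ((x, y, s) : ℝ × ℝ × ℝ))
        (interior (Set.Icc 0 t)) := by
      intro s hs
      rw [interior_Icc] at hs
      exact ((hderiv0 s hs).differentiableAt).differentiableWithinAt
    have hmono := monotoneOn_of_deriv_nonneg (convex_Icc (0:ℝ) t) hcont hdiff
      (fun s hs => by
        rw [interior_Icc] at hs
        exact le_of_eq ((hderiv0 s hs).deriv).symm)
    have hanti := antitoneOn_of_deriv_nonpos (convex_Icc (0:ℝ) t) hcont hdiff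
      (fun s hs => by
        rw [interior_Icc] at hs
        exact le_of_eq ((hderiv0 s hs).deriv))
    have h0 : pdx1 U ((x, y, 0) : ℝ × ℝ × ℝ) + pdx2 V ((x, y, 0) : ℝ × ℝ × ℝ) = 0 :=
      hinit_div _ (hDmem 0 ⟨le_rfl, ht0⟩) rfl
    have hle := hanti (Set.left_mem_Icc.mpr ht0) (Set.right_mem_Icc.mpr ht0) ht0
    have hge := hmono (Set.left_mem_Icc.mpr ht0) (Set.right_mem_Icc.mpr ht0) ht0
    simp only at hle hge
    linarith
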